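/- Let τ ∈ (0,1) be such that (1−τ)‖Rh‖² + τ‖Sh‖² > 0 for all h ∈ N∖{0}, and suppose that ‖R f^τ‖² + ‖R h^τ‖² = 1 and ‖S f^τ‖² + ‖S h^τ‖² = 1 (conditions that hold at the minimizer τ^y of τ ↦ ‖Q̃ h^τ‖²). If additionally ⟨R f^τ, R h^τ⟩ = 0 or ⟨S f^τ, S h^τ⟩ = 0, then both orthogonality relations hold, the squared Chebyshev radius equals ρ² = ‖Q̃ h^τ‖², and Q̃ f^τ is a Chebyshev center: lwce_y(Q̃ f^τ) = ρ. -/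

import Mathlib

open scoped ENNReal

set_option maxHeartbeats 1000000 in
/-- Under the norm identities `‖Rf^τ‖² + ‖Rh^τ‖² = 1` and
`‖Sf^τ‖² + ‖Sh^τ‖² = 1`, if one of the orthogonality relations
`⟨Rf^τ, Rh^τ⟩ = 0` or `⟨Sf^τ, Sh^τ⟩ = 0` holds, then both hold, the squared
Chebyshev radius equals `‖Q̃ h^τ‖²`, and `Q̃ f^τ` is a Chebyshev center. -/
theorem statement9
    {F GR GS Z : Type*}
    [NormedAddCommGroup F] [InnerProductSpace ℝ F] [FiniteDimensional ℝ F]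
    [NormedAddCommGroup GR] [InnerProductSpace ℝ GR] [FiniteDimensional ℝ GR]
    [NormedAddCommGroup GS] [InnerProductSpace ℝ GS] [FiniteDimensional ℝ GS]
    [NormedAddCommGroup Z] [InnerProductSpace ℝ Z] [FiniteDimensional ℝ Z]
    {m : ℕ}
    (R : F →ₗ[ℝ] GR) (S : F →ₗ[ℝ] GS) (Qt : F →ₗ[ℝ] Z) (Λ : F →ₗ[ℝ] (Fin m → ℝ))
    (y : Fin m → ℝ)
    (hCne : {f : F | ‖R f‖ ≤ 1 ∧ ‖S f‖ ≤ 1 ∧ Λ f = y}.Nonempty)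
    (τ : ℝ) (hτ : τ ∈ Set.Ioo (0 : ℝ) 1)
    (hpos : ∀ h ∈ LinearMap.ker Λ, h ≠ 0 →
      0 < (1 - τ) * ‖R h‖ ^ 2 + τ * ‖S h‖ ^ 2)
    (fτ : F) (hfτΛ : Λ fτ = y)
    (hfτmin : ∀ g : F, Λ g = y →
      (1 - τ) * ‖R fτ‖ ^ 2 + τ * ‖S fτ‖ ^ 2 ≤ (1 - τ) * ‖R g‖ ^ 2 + τ * ‖S g‖ ^ 2)
    (lam : ℝ)
    (hlam : ∀ h ∈ LinearMap.ker Λ,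
      ‖Qt h‖ ^ 2 ≤ lam * ((1 - τ) * ‖R h‖ ^ 2 + τ * ‖S h‖ ^ 2))
    (hτvec : F) (hτmem : hτvec ∈ LinearMap.ker Λ)
    (hτattain : ‖Qt hτvec‖ ^ 2 = lam * ((1 - τ) * ‖R hτvec‖ ^ 2 + τ * ‖S hτvec‖ ^ 2))
    (hτnorm : (1 - τ) * ‖R hτvec‖ ^ 2 + τ * ‖S hτvec‖ ^ 2 =
      1 - ((1 - τ) * ‖R fτ‖ ^ 2 + τ * ‖S fτ‖ ^ 2))
    -- norm identities holding at the minimizer `τ^y` of `τ ↦ ‖Q̃ h^τ‖²`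
    (hRone : ‖R fτ‖ ^ 2 + ‖R hτvec‖ ^ 2 = 1)
    (hSone : ‖S fτ‖ ^ 2 + ‖S hτvec‖ ^ 2 = 1)
    -- one of the orthogonality relations
    (horth : (inner ℝ (R fτ) (R hτvec) : ℝ) = 0 ∨ (inner ℝ (S fτ) (S hτvec) : ℝ) = 0) :
    (inner ℝ (R fτ) (R hτvec) : ℝ) = 0 ∧ (inner ℝ (S fτ) (S hτvec) : ℝ) = 0 ∧
    (⨅ z : Z, ⨆ f ∈ {f : F | ‖R f‖ ≤ 1 ∧ ‖S f‖ ≤ 1 ∧ Λ f = y},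
        ENNReal.ofReal ‖Qt f - z‖) ^ 2 = ENNReal.ofReal (‖Qt hτvec‖ ^ 2) ∧
    (⨆ f ∈ {f : F | ‖R f‖ ≤ 1 ∧ ‖S f‖ ≤ 1 ∧ Λ f = y},
        ENNReal.ofReal ‖Qt f - Qt fτ‖) =
      ⨅ z : Z, ⨆ f ∈ {f : F | ‖R f‖ ≤ 1 ∧ ‖S f‖ ≤ 1 ∧ Λ f = y},
        ENNReal.ofReal ‖Qt f - z‖ := by
  obtain ⟨hτ0, hτ1⟩ := hτ
  have hτ1' : (0:ℝ) ≤ 1 - τ := by linarith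
  have sqle : ∀ x u : ℝ, 0 ≤ u → x ^ 2 ≤ u ^ 2 → x ≤ u := by
    intro x u hu hxu
    nlinarith [sq_nonneg (x - u), sq_nonneg (x + u)]
  -- first-order optimality condition
  have foc : ∀ h ∈ LinearMap.ker Λ,
      (1 - τ) * (inner ℝ (R fτ) (R h) : ℝ) + τ * (inner ℝ (S fτ) (S h) : ℝ) = 0 := by
    intro h hh
    set a : ℝ := inner ℝ (R fτ) (R h) with ha
    set b : ℝ := inner ℝ (S fτ) (S h) with hb
    set c : ℝ := (1 - τ) * a + τ * b with hc
    set d : ℝ := (1 - τ) * ‖R h‖ ^ 2 + τ * ‖S h‖ ^ 2 with hdd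
    have hd : 0 ≤ d := by positivity
    have key : ∀ t : ℝ, 0 ≤ 2 * t * c + t ^ 2 * d := by
      intro t
      have hΛ : Λ (fτ + t • h) = y := by
        simp [map_add, map_smul, hfτΛ, LinearMap.mem_ker.mp hh]
      have hmin := hfτmin (fτ + t • h) hΛ
      have hR : ‖R (fτ + t • h)‖ ^ 2 = ‖R fτ‖ ^ 2 + 2 * (t * a) + t ^ 2 * ‖R h‖ ^ 2 := by
        rw [map_add, map_smul, norm_add_sq_real, real_inner_smul_right, norm_smul,
          Real.norm_eq_abs, mul_pow, sq_abs, ← ha]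
      have hS : ‖S (fτ + t • h)‖ ^ 2 = ‖S fτ‖ ^ 2 + 2 * (t * b) + t ^ 2 * ‖S h‖ ^ 2 := by
        rw [map_add, map_smul, norm_add_sq_real, real_inner_smul_right, norm_smul,
          Real.norm_eq_abs, mul_pow, sq_abs, ← hb]
      rw [hR, hS] at hmin
      rw [hc, hdd]
      nlinarith [hmin]
    have hd1 : (0:ℝ) < d + 1 := by linarith
    have hk := key (-c / (d + 1))
    have h2 : 2 * (-c / (d + 1)) * c + (-c / (d + 1)) ^ 2 * d
        = (-(c ^ 2) * (d + 2)) / (d + 1) ^ 2 := by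
      field_simp
      ring
    rw [h2] at hk
    have h3 : (0:ℝ) ≤ -(c ^ 2) * (d + 2) := by
      rcases div_nonneg_iff.mp hk with ⟨hnum, _⟩ | ⟨_, hden⟩
      · exact hnum
      · exact absurd hden (not_le.mpr (pow_pos hd1 2))
    have hcsq : c ^ 2 ≤ 0 := by nlinarith
    have hc0 : c = 0 := by
      have : c ^ 2 = 0 := le_antisymm hcsq (sq_nonneg c)
      exact pow_eq_zero_iff two_ne_zero |>.mp this
    rw [hc] at hc0
    exact hc0
  -- both orthogonality relations hold
  have hfoc := foc hτvec hτmem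
  have haR : (inner ℝ (R fτ) (R hτvec) : ℝ) = 0 := by
    rcases horth with h | h
    · exact h
    · rw [h] at hfoc
      have h1 : (1 - τ) * (inner ℝ (R fτ) (R hτvec) : ℝ) = 0 := by linarith
      rcases mul_eq_zero.mp h1 with h2 | h2
      · linarith
      · exact h2
  have haS : (inner ℝ (S fτ) (S hτvec) : ℝ) = 0 := by
    rcases horth with h | h
    · rw [h] at hfoc
      have h1 : τ * (inner ℝ (S fτ) (S hτvec) : ℝ) = 0 := by linarith
      rcases mul_eq_zero.mp h1 with h2 | h2
      · linarith
      · exact h2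
    · exact h
  -- upper bound: for feasible f, ‖Qt f − Qt fτ‖ ≤ ‖Qt hτvec‖
  have hub : ∀ f : F, ‖R f‖ ≤ 1 → ‖S f‖ ≤ 1 → Λ f = y →
      ‖Qt f - Qt fτ‖ ≤ ‖Qt hτvec‖ := by
    intro f hf1 hf2 hf3
    have hhk : f - fτ ∈ LinearMap.ker Λ := by
      simp [LinearMap.mem_ker, map_sub, hf3, hfτΛ]
    have hfoc2 := foc (f - fτ) hhk
    have e1R : (inner ℝ (R fτ) (R (f - fτ)) : ℝ) = (inner ℝ (R fτ) (R f) : ℝ) - ‖R fτ‖ ^ 2 := by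
      rw [map_sub, inner_sub_right, real_inner_self_eq_norm_sq]
    have e1S : (inner ℝ (S fτ) (S (f - fτ)) : ℝ) = (inner ℝ (S fτ) (S f) : ℝ) - ‖S fτ‖ ^ 2 := by
      rw [map_sub, inner_sub_right, real_inner_self_eq_norm_sq]
    have e2R : ‖R (f - fτ)‖ ^ 2
        = ‖R f‖ ^ 2 - 2 * (inner ℝ (R fτ) (R f) : ℝ) + ‖R fτ‖ ^ 2 := by
      rw [map_sub, norm_sub_sq_real, real_inner_comm]
    have e2S : ‖S (f - fτ)‖ ^ 2
        = ‖S f‖ ^ 2 - 2 * (inner ℝ (S fτ) (S f) : ℝ) + ‖S fτ‖ ^ 2 := by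
      rw [map_sub, norm_sub_sq_real, real_inner_comm]
    rw [e1R, e1S] at hfoc2
    have hf1' : ‖R f‖ ^ 2 ≤ 1 := pow_le_one₀ (norm_nonneg _) hf1
    have hf2' : ‖S f‖ ^ 2 ≤ 1 := pow_le_one₀ (norm_nonneg _) hf2
    have hJh : (1 - τ) * ‖R (f - fτ)‖ ^ 2 + τ * ‖S (f - fτ)‖ ^ 2
        ≤ (1 - τ) * ‖R hτvec‖ ^ 2 + τ * ‖S hτvec‖ ^ 2 := by
      rw [e2R, e2S, hτnorm]
      nlinarith [hfoc2]
    have hJnn : 0 ≤ (1 - τ) * ‖R (f - fτ)‖ ^ 2 + τ * ‖S (f - fτ)‖ ^ 2 := by positivity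
    have hq : ‖Qt (f - fτ)‖ ^ 2 ≤ ‖Qt hτvec‖ ^ 2 := by
      have h1 := hlam (f - fτ) hhk
      rcases le_or_gt 0 lam with hl | hl
      · calc ‖Qt (f - fτ)‖ ^ 2
            ≤ lam * ((1 - τ) * ‖R (f - fτ)‖ ^ 2 + τ * ‖S (f - fτ)‖ ^ 2) := h1
          _ ≤ lam * ((1 - τ) * ‖R hτvec‖ ^ 2 + τ * ‖S hτvec‖ ^ 2) :=
              mul_le_mul_of_nonneg_left hJh hl
          _ = ‖Qt hτvec‖ ^ 2 := hτattain.symm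
      · have h2 : lam * ((1 - τ) * ‖R (f - fτ)‖ ^ 2 + τ * ‖S (f - fτ)‖ ^ 2) ≤ 0 :=
          mul_nonpos_of_nonpos_of_nonneg hl.le hJnn
        nlinarith [sq_nonneg ‖Qt hτvec‖]
    have hq' : ‖Qt f - Qt fτ‖ ^ 2 ≤ ‖Qt hτvec‖ ^ 2 := by rwa [map_sub] at hq
    exact sqle _ _ (norm_nonneg _) hq'
  -- the two extreme feasible points fτ ± hτvec
  have hΛp : Λ (fτ + hτvec) = y := by
    simp [map_add, hfτΛ, LinearMap.mem_ker.mp hτmem]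
  have hΛm : Λ (fτ - hτvec) = y := by
    simp [map_sub, hfτΛ, LinearMap.mem_ker.mp hτmem]
  have hRp : ‖R (fτ + hτvec)‖ ≤ 1 := by
    have : ‖R (fτ + hτvec)‖ ^ 2 = 1 := by
      rw [map_add, norm_add_sq_real, haR]; linarith
    exact sqle _ _ zero_le_one (by rw [this]; norm_num)
  have hSp : ‖S (fτ + hτvec)‖ ≤ 1 := by
    have : ‖S (fτ + hτvec)‖ ^ 2 = 1 := by
      rw [map_add, norm_add_sq_real, haS]; linarith
    exact sqle _ _ zero_le_one (by rw [this]; norm_num)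
  have hRm : ‖R (fτ - hτvec)‖ ≤ 1 := by
    have : ‖R (fτ - hτvec)‖ ^ 2 = 1 := by
      rw [map_sub, norm_sub_sq_real, haR]; linarith
    exact sqle _ _ zero_le_one (by rw [this]; norm_num)
  have hSm : ‖S (fτ - hτvec)‖ ≤ 1 := by
    have : ‖S (fτ - hτvec)‖ ^ 2 = 1 := by
      rw [map_sub, norm_sub_sq_real, haS]; linarith
    exact sqle _ _ zero_le_one (by rw [this]; norm_num)
  have hmemp : (fτ + hτvec) ∈ {f : F | ‖R f‖ ≤ 1 ∧ ‖S f‖ ≤ 1 ∧ Λ f = y} :=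
    ⟨hRp, hSp, hΛp⟩
  have hmemm : (fτ - hτvec) ∈ {f : F | ‖R f‖ ≤ 1 ∧ ‖S f‖ ≤ 1 ∧ Λ f = y} :=
    ⟨hRm, hSm, hΛm⟩
  -- sup over feasible set, upper bound at z = Qt fτ
  have hWub : (⨆ f ∈ {f : F | ‖R f‖ ≤ 1 ∧ ‖S f‖ ≤ 1 ∧ Λ f = y},
      ENNReal.ofReal ‖Qt f - Qt fτ‖) ≤ ENNReal.ofReal ‖Qt hτvec‖ := by
    refine iSup₂_le fun f hf => ?_
    exact ENNReal.ofReal_le_ofReal (hub f hf.1 hf.2.1 hf.2.2)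
  -- lower bound for every z
  have hWlb : ∀ z : Z, ENNReal.ofReal ‖Qt hτvec‖ ≤
      ⨆ f ∈ {f : F | ‖R f‖ ≤ 1 ∧ ‖S f‖ ≤ 1 ∧ Λ f = y},
        ENNReal.ofReal ‖Qt f - z‖ := by
    intro z
    have hp : ENNReal.ofReal ‖Qt (fτ + hτvec) - z‖ ≤
        ⨆ f ∈ {f : F | ‖R f‖ ≤ 1 ∧ ‖S f‖ ≤ 1 ∧ Λ f = y},
          ENNReal.ofReal ‖Qt f - z‖ :=
      le_iSup₂_of_le (fτ + hτvec) hmemp le_rfl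
    have hm : ENNReal.ofReal ‖Qt (fτ - hτvec) - z‖ ≤
        ⨆ f ∈ {f : F | ‖R f‖ ≤ 1 ∧ ‖S f‖ ≤ 1 ∧ Λ f = y},
          ENNReal.ofReal ‖Qt f - z‖ :=
      le_iSup₂_of_le (fτ - hτvec) hmemm le_rfl
    have hsum : (2:ℝ) * ‖Qt hτvec‖ ≤
        ‖Qt (fτ + hτvec) - z‖ + ‖Qt (fτ - hτvec) - z‖ := by
      have e : (Qt (fτ + hτvec) - z) - (Qt (fτ - hτvec) - z) = (2:ℝ) • Qt hτvec := by
        rw [map_add, map_sub, two_smul]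
        abel
      calc (2:ℝ) * ‖Qt hτvec‖ = ‖(2:ℝ) • Qt hτvec‖ := by
            rw [norm_smul, Real.norm_eq_abs]; norm_num
        _ = ‖(Qt (fτ + hτvec) - z) - (Qt (fτ - hτvec) - z)‖ := by rw [e]
        _ ≤ _ := norm_sub_le _ _
    rcases le_total ‖Qt (fτ + hτvec) - z‖ ‖Qt (fτ - hτvec) - z‖ with hc | hc
    · exact le_trans (ENNReal.ofReal_le_ofReal (by linarith)) hm
    · exact le_trans (ENNReal.ofReal_le_ofReal (by linarith)) hp
  have hInf : (⨅ z : Z, ⨆ f ∈ {f : F | ‖R f‖ ≤ 1 ∧ ‖S f‖ ≤ 1 ∧ Λ f = y},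
      ENNReal.ofReal ‖Qt f - z‖) = ENNReal.ofReal ‖Qt hτvec‖ :=
    le_antisymm (iInf_le_of_le (Qt fτ) hWub) (le_iInf hWlb)
  refine ⟨haR, haS, ?_, ?_⟩
  · rw [hInf, ← ENNReal.ofReal_pow (norm_nonneg _)]
  · refine le_antisymm ?_ (iInf_le _ (Qt fτ))
    rw [hInf]
    exact hWub
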